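/- Define rho' : M_n(N) -> ℕ by rho'(x) = rank((k - z_1, k - z_2, ..., k - z_n)), where (z_1 <= z_2 <= ... <= z_n) is the non-decreasing sequence listing the elements of the multiset x (so that (k - z_1, ..., k - z_n) is non-increasing). Then rho' is injective and for all x, y in M_n(N), x is strictly fairer than y for a maximization objective (i.e., the non-decreasing listing of y is lexicographically strictly smaller than the non-decreasing listing of x) if and only if rho'(x) < rho'(y). -/

import Mathlib

/-- Strict lexicographic order: `s <lex t` iff there is an index `j` with
`s i = t i` for all `i < j` and `s j < t j`. -/
def LexLt {n : ℕ} (s t : Fin n → ℕ) : Prop :=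
  ∃ j : Fin n, (∀ i, i < j → s i = t i) ∧ s j < t j

/-- `rank(s) = ∑_{i=1}^n C(n + x_i - i, x_i - 1)`, where a summand with
`x_i = 0` is taken to be `0` (indices `i : Fin n` are 0-based, so `i+1` is the
1-based position). -/
def rank {n : ℕ} (s : Fin n → ℕ) : ℕ :=
  ∑ i : Fin n, if s i = 0 then 0 else Nat.choose (n + s i - ((i : ℕ) + 1)) (s i - 1)

/-- The non-decreasing sequence `(z_1 ≤ ... ≤ z_n)` listing the elements of a
multiset `x` of cardinality `n` (entry at position `i`). -/
def ascSeq (n : ℕ) (x : Multiset ℕ) : Fin n → ℕ :=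
  fun i => (Multiset.sort x (· ≤ ·)).getD i 0

/-! ### Auxiliary material -/

/-- List version of `rank`. -/
def rankL : List ℕ → ℕ
  | [] => 0
  | a :: l => (if a = 0 then 0 else Nat.choose (l.length + a) (a - 1)) + rankL l

lemma choose_add_mono (m : ℕ) {a v : ℕ} (h : a ≤ v) :
    Nat.choose (m + a) a ≤ Nat.choose (m + v) v := by
  calc Nat.choose (m + a) a = Nat.choose (m + a) m := by
        rw [show m + a = a + m by omega]; exact Nat.choose_symm_add
    _ ≤ Nat.choose (m + v) m := Nat.choose_le_choose m (by omega)
    _ = Nat.choose (m + v) v := by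
        rw [show m + v = v + m by omega]; exact Nat.choose_symm_add.symm

/-- Key bound: a non-increasing list with entries `≤ v` has rank `< C(len+v, v)`. -/
lemma rankL_lt : ∀ (l : List ℕ) (v : ℕ), l.Pairwise (· ≥ ·) → (∀ a ∈ l, a ≤ v) →
    rankL l < Nat.choose (l.length + v) v
  | [], v, _, _ => by
      simpa [rankL] using Nat.choose_pos (show v ≤ 0 + v by omega)
  | a :: l, v, hs, hb => by
      have ha : ∀ b ∈ l, b ≤ a := fun _ hb => List.rel_of_pairwise_cons hs hb
      have hsl : l.Pairwise (· ≥ ·) := hs.of_cons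
      have hav : a ≤ v := hb a (List.mem_cons_self)
      have ih := rankL_lt l a hsl ha
      rcases Nat.eq_zero_or_pos a with rfl | hpos
      · have h1 : rankL l = 0 := by simpa [Nat.lt_one_iff] using ih
        have : rankL (0 :: l) = 0 := by simp [rankL, h1]
        rw [this]
        exact Nat.choose_pos (by omega)
      · obtain ⟨b, rfl⟩ : ∃ b, a = b + 1 := ⟨a - 1, by omega⟩
        have hterm : rankL ((b + 1) :: l)
            = Nat.choose (l.length + (b + 1)) b + rankL l := by
          simp [rankL]
        have hp : Nat.choose (l.length + (b + 1)) b + Nat.choose (l.length + (b + 1)) (b + 1)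
            = Nat.choose (l.length + 1 + (b + 1)) (b + 1) := by
          rw [show l.length + 1 + (b + 1) = (l.length + (b + 1)) + 1 by omega]
          rw [Nat.choose_succ_succ]
        have hmono := choose_add_mono (l.length + 1) (show b + 1 ≤ v from hav)
        have hlen : (((b + 1) :: l).length : ℕ) = l.length + 1 := by simp
        rw [hlen]
        omega

/-- Strict monotonicity of `rankL` with respect to lex order, for non-increasing lists. -/
lemma rankL_lex {s t : List ℕ} (h : List.Lex (· < ·) s t) :
    s.length = t.length → s.Pairwise (· ≥ ·) → rankL s < rankL t := by
  induction h with
  | nil => intro hlen _; simp at hlen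
  | @cons a l₁ l₂ h ih =>
      intro hlen hs
      have hll : l₁.length = l₂.length := by simpa using hlen
      have := ih hll hs.of_cons
      simp only [rankL, hll]
      omega
  | @rel a l₁ b l₂ hab =>
      intro hlen hs
      obtain ⟨c, rfl⟩ : ∃ c, b = c + 1 := ⟨b - 1, by omega⟩
      have hll : l₁.length = l₂.length := by simpa using hlen
      have h1 : rankL (a :: l₁) < Nat.choose ((a :: l₁).length + c) c := by
        refine rankL_lt _ c hs ?_
        intro x hx
        rcases List.mem_cons.mp hx with rfl | hx
        · omega
        · have := List.rel_of_pairwise_cons hs hx; omega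
      have h2 : rankL ((c + 1) :: l₂)
          = Nat.choose (l₂.length + (c + 1)) c + rankL l₂ := by simp [rankL]
      have hlen1 : ((a :: l₁).length : ℕ) + c = l₂.length + (c + 1) := by
        simp [hll]; omega
      rw [hlen1] at h1
      omega

/-- `rank` equals `rankL` of the corresponding list. -/
lemma rank_ofFn : ∀ {n : ℕ} (s : Fin n → ℕ), rank s = rankL (List.ofFn s) := by
  intro n
  induction n with
  | zero => intro s; simp [rank, rankL]
  | succ m ih =>
      intro s
      rw [List.ofFn_succ]
      show rank s = (if s 0 = 0 then 0 else
          Nat.choose ((List.ofFn fun i : Fin m => s i.succ).length + s 0) (s 0 - 1))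
          + rankL (List.ofFn fun i : Fin m => s i.succ)
      rw [← ih (fun i => s i.succ), rank, Fin.sum_univ_succ, rank]
      congr 1
      · have h1 : m + 1 + s 0 - ((0 : ℕ) + 1) = m + s 0 := by omega
        simp [h1]
      · refine Finset.sum_congr rfl fun i _ => ?_
        have hi : (i : ℕ) < m := i.isLt
        have h2 : m + 1 + s i.succ - (((i.succ : Fin (m+1)) : ℕ) + 1)
            = m + s i.succ - ((i : ℕ) + 1) := by
          simp only [Fin.val_succ]; omega
        rw [h2]

/-- `LexLt` implies list lex on `ofFn`. -/
lemma lexLt_ofFn : ∀ {n : ℕ} {s t : Fin n → ℕ}, LexLt s t →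
    List.Lex (· < ·) (List.ofFn s) (List.ofFn t) := by
  intro n
  induction n with
  | zero => rintro s t ⟨j, -, -⟩; exact j.elim0
  | succ m ih =>
      rintro s t ⟨j, hpre, hj⟩
      rw [List.ofFn_succ, List.ofFn_succ]
      rcases Fin.eq_zero_or_eq_succ j with rfl | ⟨j', rfl⟩
      · exact List.Lex.rel hj
      · have h0 : s 0 = t 0 := hpre 0 (Fin.succ_pos j')
        rw [h0]
        refine List.Lex.cons (ih ⟨j', fun i hi => hpre i.succ ?_, hj⟩)
        exact Fin.succ_lt_succ_iff.mpr hi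

lemma lexLt_total {n : ℕ} {s t : Fin n → ℕ} (h : s ≠ t) : LexLt s t ∨ LexLt t s := by
  classical
  have hne : ∃ i, s i ≠ t i := Function.ne_iff.mp h
  let S : Finset (Fin n) := Finset.univ.filter fun i => s i ≠ t i
  have hSne : S.Nonempty := ⟨hne.choose, by simp [S, hne.choose_spec]⟩
  set j := S.min' hSne with hj
  have hjS : j ∈ S := S.min'_mem hSne
  have hpre : ∀ i, i < j → s i = t i := by
    intro i hij
    by_contra hne'
    exact absurd (S.min'_le i (by simp [S, hne'])) (not_le.mpr hij)
  have hjne : s j ≠ t j := by simpa [S] using hjS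
  rcases lt_or_gt_of_ne hjne with h1 | h1
  · exact Or.inl ⟨j, hpre, h1⟩
  · exact Or.inr ⟨j, fun i hi => (hpre i hi).symm, h1⟩

section main

variable {k n : ℕ}

lemma ascSeq_eq_getElem {x : Multiset ℕ} (hx : Multiset.card x = n) (i : Fin n) :
    ascSeq n x i = (Multiset.sort x (· ≤ ·))[(i : ℕ)]'(by
      rw [Multiset.length_sort, hx]; exact i.isLt) := by
  unfold ascSeq
  exact List.getD_eq_getElem _ _ _

lemma ascSeq_le {x : Multiset ℕ} (hx : Multiset.card x = n)
    (hxk : ∀ a ∈ x, a ≤ k) (i : Fin n) : ascSeq n x i ≤ k := by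
  rw [ascSeq_eq_getElem hx]
  apply hxk
  rw [← Multiset.mem_sort (r := (· ≤ ·))]
  exact List.getElem_mem _

lemma ascSeq_mono {x : Multiset ℕ} (hx : Multiset.card x = n)
    {i j : Fin n} (hij : i < j) : ascSeq n x i ≤ ascSeq n x j := by
  rw [ascSeq_eq_getElem hx, ascSeq_eq_getElem hx]
  have hs := Multiset.pairwise_sort x (· ≤ ·)
  have hlen : (Multiset.sort x (· ≤ ·)).length = n := by
    rw [Multiset.length_sort, hx]
  have := hs.rel_get_of_lt (a := Fin.cast hlen.symm i) (b := Fin.cast hlen.symm j)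
    (by simp only [Fin.lt_def, Fin.coe_cast]; exact hij)
  simpa [List.get_eq_getElem, Fin.coe_cast] using this

lemma sorted_ofFn_sub {x : Multiset ℕ} (hx : Multiset.card x = n) :
    (List.ofFn fun i : Fin n => k - ascSeq n x i).Pairwise (· ≥ ·) := by
  rw [List.pairwise_ofFn]
  intro i j hij
  have := ascSeq_mono hx hij
  omega

lemma lexLt_sub {x y : Multiset ℕ} (hx : Multiset.card x = n) (hy : Multiset.card y = n)
    (hxk : ∀ a ∈ x, a ≤ k) (h : LexLt (ascSeq n y) (ascSeq n x)) :
    LexLt (fun i => k - ascSeq n x i) (fun i => k - ascSeq n y i) := by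
  obtain ⟨j, hpre, hj⟩ := h
  refine ⟨j, fun i hi => ?_, ?_⟩
  · show k - ascSeq n x i = k - ascSeq n y i
    rw [hpre i hi]
  · show k - ascSeq n x j < k - ascSeq n y j
    have := ascSeq_le hx hxk j
    omega

lemma rank_lt_of_lexLt {x y : Multiset ℕ} (hx : Multiset.card x = n)
    (hy : Multiset.card y = n) (hxk : ∀ a ∈ x, a ≤ k)
    (h : LexLt (ascSeq n y) (ascSeq n x)) :
    rank (fun i => k - ascSeq n x i) < rank (fun i => k - ascSeq n y i) := by
  rw [rank_ofFn, rank_ofFn]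
  refine rankL_lex (lexLt_ofFn (lexLt_sub hx hy hxk h)) (by simp) (sorted_ofFn_sub hx)

end main

theorem rho_max_iso (k n : ℕ) (x y : Multiset ℕ)
    (hx : Multiset.card x = n) (hy : Multiset.card y = n)
    (hxk : ∀ a ∈ x, a ≤ k) (hyk : ∀ a ∈ y, a ≤ k) :
    (LexLt (ascSeq n y) (ascSeq n x) ↔
      rank (fun i => k - ascSeq n x i) < rank (fun i => k - ascSeq n y i)) ∧
    (rank (fun i => k - ascSeq n x i) = rank (fun i => k - ascSeq n y i) → x = y) := by
  have hasc_eq : ascSeq n x = ascSeq n y → x = y := by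
    intro h
    have hlx : (Multiset.sort x (· ≤ ·)).length = n := by rw [Multiset.length_sort, hx]
    have hly : (Multiset.sort y (· ≤ ·)).length = n := by rw [Multiset.length_sort, hy]
    have hlists : Multiset.sort x (· ≤ ·) = Multiset.sort y (· ≤ ·) := by
      apply List.ext_getElem (by rw [hlx, hly])
      intro i h1 h2
      have hi : i < n := by rwa [hlx] at h1
      have := congrFun h ⟨i, hi⟩
      rwa [ascSeq_eq_getElem hx, ascSeq_eq_getElem hy] at this
    calc x = ↑(Multiset.sort x (· ≤ ·)) := (Multiset.sort_eq _ _).symm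
      _ = ↑(Multiset.sort y (· ≤ ·)) := by rw [hlists]
      _ = y := Multiset.sort_eq _ _
  constructor
  · constructor
    · exact fun h => rank_lt_of_lexLt hx hy hxk h
    · intro hrank
      by_contra hcon
      rcases eq_or_ne (ascSeq n y) (ascSeq n x) with heq | hne
      · rw [show (fun i => k - ascSeq n x i) = (fun i => k - ascSeq n y i) by
          funext i; rw [heq]] at hrank
        exact lt_irrefl _ hrank
      · rcases lexLt_total hne with h1 | h1
        · exact hcon h1
        · exact absurd (rank_lt_of_lexLt hy hx hyk h1) (by omega)
  · intro hrank
    rcases eq_or_ne (ascSeq n x) (ascSeq n y) with heq | hne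
    · exact hasc_eq heq
    · rcases lexLt_total hne with h1 | h1
      · exact absurd (rank_lt_of_lexLt hy hx hyk h1) (by omega)
      · exact absurd (rank_lt_of_lexLt hx hy hxk h1) (by omega)
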